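/- arXiv:1711.00923 — 3 statements merged into one kernel-verified Lean document; each statement's English description precedes it below -/
import Mathlib

section
/- For α > 0 and λ ∈ ℝ \ {0}, the ψ-Riemann–Liouville fractional integral of order α of t ↦ E_α(λ(ψ(t) − ψ(a))^α) equals (1/λ)(E_α(λ(ψ(t) − ψ(a))^α) − 1) for all t ∈ [a,b], where E_α is the Mittag-Leffler function. -/
open Real Set

/-- ψ-Riemann–Liouville fractional integral of order α with base point a. -/
noncomputable def psiInt (ψ : ℝ → ℝ) (a α : ℝ) (x : ℝ → ℝ) (t : ℝ) : ℝ :=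
  (1 / Real.Gamma α) * ∫ τ in a..t, deriv ψ τ * (ψ t - ψ τ) ^ (α - 1) * x τ

/-- the operator x ↦ (1/ψ') x'. -/
noncomputable def psiD (ψ : ℝ → ℝ) : (ℝ → ℝ) → ℝ → ℝ :=
  fun x t => (deriv ψ t)⁻¹ * deriv x t

/-- ψ-Caputo fractional derivative of order α ∈ (2,3) (n = 3):
Riemann–Liouville type derivative of x minus its second order ψ-Taylor polynomial at a. -/
noncomputable def caputo (ψ : ℝ → ℝ) (a α : ℝ) (x : ℝ → ℝ) : ℝ → ℝ :=
  (psiD ψ)^[3] (psiInt ψ a (3 - α) (fun s =>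
    x s - x a - psiD ψ x a * (ψ s - ψ a) - psiD ψ (psiD ψ x) a / 2 * (ψ s - ψ a) ^ 2))

/-- ψ-Caputo fractional derivative of order α ∈ (2,3) for C³ functions
(integral representation). -/
noncomputable def caputoC3 (ψ : ℝ → ℝ) (a α : ℝ) (x : ℝ → ℝ) : ℝ → ℝ :=
  psiInt ψ a (3 - α) ((psiD ψ)^[3] x)

/-- Mittag-Leffler function. -/
noncomputable def ML (α z : ℝ) : ℝ := ∑' k : ℕ, z ^ k / Real.Gamma (k * α + 1)

/-- the constant γ_x of the Volterra equation. -/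
noncomputable def gammaX (ψ : ℝ → ℝ) (a b v α K xa xa1 N : ℝ) (f : ℝ → ℝ → ℝ)
    (x : ℝ → ℝ) : ℝ :=
  (psiInt ψ a α (fun s => f s (x s)) b - K * psiInt ψ a (2 * α) (fun s => f s (x s)) v
    + xa * (1 - K / Real.Gamma (1 + α) * (ψ v - ψ a) ^ α)
    + xa1 / deriv ψ a * (ψ b - ψ a - K / Real.Gamma (2 + α) * (ψ v - ψ a) ^ (1 + α))) / N

/-- the operator F associated to the Volterra equation. -/
noncomputable def Fop (ψ : ℝ → ℝ) (a b v α K xa xa1 N : ℝ) (f : ℝ → ℝ → ℝ)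
    (x : ℝ → ℝ) (t : ℝ) : ℝ :=
  psiInt ψ a α (fun s => f s (x s)) t + xa + xa1 / deriv ψ a * (ψ t - ψ a)
    + gammaX ψ a b v α K xa xa1 N f x * (ψ t - ψ a) ^ 2



section AuxML
open Real Set MeasureTheory

lemma gamma_lb {α x : ℝ} (hα : 0 < α) (hx : 2 ≤ x) :
    Real.Gamma x * (x - 1) ^ α ≤ Real.Gamma (x + α) := by
  have hx0 : (0:ℝ) < x - 1 := by linarith
  have h := Real.convexOn_log_Gamma.slope_mono_adjacent
    (x := x - 1) (y := x) (z := x + α)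
    (by simp [mem_Ioi]; linarith) (by simp [mem_Ioi]; linarith)
    (by linarith) (by linarith)
  have hGx : Real.Gamma x = (x - 1) * Real.Gamma (x - 1) := by
    have := Real.Gamma_add_one (s := x - 1) (ne_of_gt hx0)
    simpa using this
  have hGpos : 0 < Real.Gamma (x - 1) := Real.Gamma_pos_of_pos hx0
  have hGxpos : 0 < Real.Gamma x := Real.Gamma_pos_of_pos (by linarith)
  have hGxa : 0 < Real.Gamma (x + α) := Real.Gamma_pos_of_pos (by linarith)
  simp only [Function.comp] at h
  have hslope : (Real.log (Real.Gamma x) - Real.log (Real.Gamma (x-1))) / (x - (x-1))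
      = Real.log (x - 1) := by
    rw [hGx, Real.log_mul (ne_of_gt hx0) (ne_of_gt hGpos)]
    ring
  rw [hslope, show x + α - x = α from by ring] at h
  have h' := (le_div_iff₀ hα).mp h
  have h2 : Real.log (Real.Gamma x) + Real.log (x-1) * α ≤ Real.log (Real.Gamma (x + α)) := by
    linarith
  calc Real.Gamma x * (x-1) ^ α
      = Real.exp (Real.log (Real.Gamma x) + Real.log (x-1) * α) := by
        rw [Real.exp_add, Real.exp_log hGxpos, ← Real.rpow_def_of_pos hx0]
    _ ≤ Real.exp (Real.log (Real.Gamma (x + α))) := Real.exp_le_exp.mpr h2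
    _ = Real.Gamma (x + α) := Real.exp_log hGxa

lemma ML_summable {α : ℝ} (hα : 0 < α) (z : ℝ) :
    Summable (fun k : ℕ => z ^ k / Real.Gamma (k * α + 1)) := by
  rcases eq_or_ne z 0 with rfl | hz
  · apply summable_of_ne_finset_zero (s := {0})
    intro k hk
    simp [zero_pow (by simpa using hk)]
  · apply summable_of_ratio_norm_eventually_le (r := 1/2) (by norm_num)
    have h1 : ∀ᶠ k : ℕ in Filter.atTop, 2 ≤ (k:ℝ) * α + 1 := by
      have := Filter.tendsto_atTop_add_const_right Filter.atTop 1
        ((tendsto_natCast_atTop_atTop (R := ℝ)).atTop_mul_const hα)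
      exact this.eventually_ge_atTop 2
    have h2 : ∀ᶠ k : ℕ in Filter.atTop, 2 * |z| ≤ ((k:ℝ) * α) ^ α := by
      have := (tendsto_rpow_atTop hα).comp
        ((tendsto_natCast_atTop_atTop (R := ℝ)).atTop_mul_const hα)
      exact this.eventually_ge_atTop (2 * |z|)
    filter_upwards [h1, h2] with k hk1 hk2
    have hx := gamma_lb hα hk1
    have hx0 : (0:ℝ) < (k:ℝ) * α + 1 := by linarith
    have hGpos : 0 < Real.Gamma ((k:ℝ) * α + 1) := Real.Gamma_pos_of_pos hx0
    have hGapos : 0 < Real.Gamma ((k:ℝ) * α + 1 + α) := Real.Gamma_pos_of_pos (by linarith)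
    have he : (((k:ℕ)+1 : ℕ) : ℝ) * α + 1 = ((k:ℝ) * α + 1) + α := by push_cast; ring
    have hbound : 2 * |z| * Real.Gamma ((k:ℝ) * α + 1) ≤ Real.Gamma ((k:ℝ)*α+1+α) := by
      have h5 : Real.Gamma ((k:ℝ)*α+1) * (2 * |z|) ≤ Real.Gamma ((k:ℝ)*α+1) * (((k:ℝ)*α+1-1)^α) := by
        apply mul_le_mul_of_nonneg_left _ hGpos.le
        simpa using hk2
      nlinarith
    rw [norm_div, norm_div, norm_pow, norm_pow]
    rw [Real.norm_eq_abs (Real.Gamma _), Real.norm_eq_abs (Real.Gamma _),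
      abs_of_pos hGpos, show ‖z‖ = |z| from rfl]
    rw [he, abs_of_pos hGapos, ← mul_div_assoc, div_le_div_iff₀ hGapos hGpos]
    calc |z| ^ (k+1) * Real.Gamma ((k:ℝ)*α+1)
        = |z| ^ k / 2 * (2 * |z| * Real.Gamma ((k:ℝ)*α+1)) := by ring
      _ ≤ |z| ^ k / 2 * Real.Gamma ((k:ℝ)*α+1+α) :=
          mul_le_mul_of_nonneg_left hbound (by positivity)
      _ = 1/2 * |z| ^ k * Real.Gamma ((k:ℝ)*α+1+α) := by ring


lemma real_beta {p q X : ℝ} (hp : 0 < p) (hq : 0 < q) (hX : 0 < X) :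
    ∫ u in (0:ℝ)..X, u ^ (p-1) * (X-u) ^ (q-1)
      = X ^ (p+q-1) * (Real.Gamma p * Real.Gamma q / Real.Gamma (p+q)) := by
  have hbeta : Complex.betaIntegral p q
      = Complex.Gamma p * Complex.Gamma q / Complex.Gamma ((p:ℂ)+(q:ℂ)) := by
    have h := Complex.Gamma_mul_Gamma_eq_betaIntegral (s := (p:ℂ)) (t := (q:ℂ))
      (by simpa using hp) (by simpa using hq)
    have hne : Complex.Gamma ((p:ℂ)+(q:ℂ)) ≠ 0 :=
      Complex.Gamma_ne_zero_of_re_pos (by simp; positivity)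
    rw [eq_div_iff hne, mul_comm _ (Complex.Gamma _), ← h]
  have key := Complex.betaIntegral_scaled (p:ℂ) (q:ℂ) hX
  apply Complex.ofReal_injective
  rw [← intervalIntegral.integral_ofReal]
  have hcongr : ∫ u in (0:ℝ)..X, ((u ^ (p-1) * (X-u) ^ (q-1) : ℝ) : ℂ)
      = ∫ u in (0:ℝ)..X, (u:ℂ) ^ ((p:ℂ) - 1) * ((X:ℂ) - u) ^ ((q:ℂ) - 1) := by
    apply intervalIntegral.integral_congr
    intro u hu
    rw [Set.uIcc_of_le hX.le] at hu
    push_cast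
    rw [Complex.ofReal_cpow hu.1 (p-1), Complex.ofReal_cpow (by linarith [hu.2]) (q-1)]
    push_cast
    ring
  rw [hcongr, key, hbeta]
  rw [Complex.ofReal_mul, Complex.ofReal_cpow hX.le]
  simp [Complex.Gamma_ofReal]
  left
  rw [show ((p:ℂ)+(q:ℂ)) = ((p+q:ℝ):ℂ) by push_cast; ring, Complex.Gamma_ofReal]


end AuxML

section MainML
open Real Set MeasureTheory

set_option maxHeartbeats 2000000 in
/-- fractional integral of the Mittag-Leffler function. -/
theorem psiInt_mittagLeffler (a b α lam : ℝ) (ψ : ℝ → ℝ) (hab : a < b)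
    (hψmono : StrictMonoOn ψ (Icc a b)) (hψdiff : ContDiffOn ℝ 1 ψ (Icc a b))
    (hψ' : ∀ t ∈ Icc a b, deriv ψ t ≠ 0)
    (hα : 0 < α) (hlam : lam ≠ 0) :
    ∀ t ∈ Icc a b,
      psiInt ψ a α (fun s => ML α (lam * (ψ s - ψ a) ^ α)) t
        = (1 / lam) * (ML α (lam * (ψ t - ψ a) ^ α) - 1) := by
  intro t ht
  have hML0 : ML α 0 = 1 := by
    rw [ML, tsum_eq_single 0 (fun k hk => by simp [zero_pow hk])]
    simp [Real.Gamma_one]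
  rcases eq_or_lt_of_le ht.1 with rfl | hat
  · simp [psiInt, intervalIntegral.integral_same, Real.zero_rpow hα.ne', hML0]
  -- main case a < t
  have hGα : 0 < Real.Gamma α := Real.Gamma_pos_of_pos hα
  have htb : t ≤ b := ht.2
  have hIccsub : Icc a t ⊆ Icc a b := Icc_subset_Icc_right htb
  have hamem : a ∈ Icc a b := ⟨le_rfl, hab.le⟩
  have hX : 0 < ψ t - ψ a := sub_pos.mpr (hψmono hamem ht hat)
  set X := ψ t - ψ a with hXdef
  -- derivative facts
  have hdiffat : ∀ τ ∈ Ioo a t, HasDerivAt ψ (deriv ψ τ) τ := by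
    intro τ hτ
    have hmem : Icc a b ∈ nhds τ := Icc_mem_nhds hτ.1 (lt_of_lt_of_le hτ.2 htb)
    exact (((hψdiff.differentiableOn one_ne_zero) τ (hIccsub ⟨hτ.1.le, hτ.2.le⟩)).differentiableAt
      hmem).hasDerivAt
  have hd : ∀ τ ∈ Ioo a t, HasDerivWithinAt ψ (deriv ψ τ) (Ioo a t) τ :=
    fun τ hτ => (hdiffat τ hτ).hasDerivWithinAt
  have hderiv0 : ∀ τ ∈ Ioo a t, 0 ≤ deriv ψ τ := by
    intro τ hτ
    have hsl := hasDerivAt_iff_tendsto_slope.mp (hdiffat τ hτ)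
    have hsl' := hsl.mono_left
      (nhdsWithin_mono τ (fun y (hy : y ∈ Ioi τ) => ne_of_gt hy))
    refine ge_of_tendsto hsl' ?_
    filter_upwards [Ioo_mem_nhdsGT_of_mem (⟨le_rfl, hτ.2⟩ : τ ∈ Ico τ t)] with y hy
    have h1 : ψ τ ≤ ψ y := (hψmono (hIccsub ⟨hτ.1.le, hτ.2.le⟩)
      (hIccsub ⟨(hτ.1.trans hy.1).le, hy.2.le⟩) hy.1).le
    have h2 : 0 < y - τ := sub_pos.mpr hy.1
    rw [slope_def_field]
    exact div_nonneg (by linarith) h2.le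
  have hinj : InjOn ψ (Ioo a t) :=
    hψmono.injOn.mono (fun τ hτ => hIccsub ⟨hτ.1.le, hτ.2.le⟩)
  have hcont : ContinuousOn ψ (Icc a t) := hψdiff.continuousOn.mono hIccsub
  have himg : ψ '' Ioo a t = Ioo (ψ a) (ψ t) := by
    apply Subset.antisymm
    · rintro y ⟨τ, hτ, rfl⟩
      exact ⟨hψmono hamem (hIccsub ⟨hτ.1.le, hτ.2.le⟩) hτ.1,
        hψmono (hIccsub ⟨hτ.1.le, hτ.2.le⟩) ht hτ.2⟩
    · exact intermediate_value_Ioo hat.le hcont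
  -- change of variables
  have hchg : ∀ g : ℝ → ℝ, ∫ u in Ioo (ψ a) (ψ t), g u
      = ∫ τ in Ioo a t, deriv ψ τ * g (ψ τ) := by
    intro g
    rw [← himg, integral_image_eq_integral_abs_deriv_smul measurableSet_Ioo hd hinj g]
    refine setIntegral_congr_fun measurableSet_Ioo (fun τ hτ => ?_)
    simp [abs_of_nonneg (hderiv0 τ hτ), smul_eq_mul]
  have hchgInt : ∀ g : ℝ → ℝ, IntegrableOn g (Ioo (ψ a) (ψ t)) →
      IntegrableOn (fun τ => deriv ψ τ * g (ψ τ)) (Ioo a t) := by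
    intro g hg
    rw [← himg] at hg
    refine ((integrableOn_image_iff_integrableOn_abs_deriv_smul measurableSet_Ioo hd hinj
      g).mp hg).congr_fun (fun τ hτ => ?_) measurableSet_Ioo
    simp [abs_of_nonneg (hderiv0 τ hτ), smul_eq_mul]
  -- beta integrals in u-space
  have hJ : ∀ r : ℝ, 0 ≤ r → ∫ u in Ioo (ψ a) (ψ t), (u - ψ a) ^ r * (ψ t - u) ^ (α - 1)
      = X ^ (r + α) * (Real.Gamma (r+1) * Real.Gamma α / Real.Gamma (r + 1 + α)) := by
    intro r hr
    have htr : ∀ v ∈ Ioo (0:ℝ) X, HasDerivWithinAt (fun v => ψ a + v) 1 (Ioo 0 X) v :=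
      fun v _ => ((hasDerivAt_id v).const_add (ψ a)).hasDerivWithinAt
    have himg2 : (fun v => ψ a + v) '' Ioo 0 X = Ioo (ψ a) (ψ t) := by
      rw [image_const_add_Ioo]
      congr 1 <;> simp [hXdef] <;> ring
    have hinj2 : InjOn (fun v => ψ a + v) (Ioo 0 X) := fun u _ v _ h => by simpa using h
    rw [← himg2, integral_image_eq_integral_abs_deriv_smul measurableSet_Ioo htr hinj2]
    have hcongr : ∀ v ∈ Ioo (0:ℝ) X, |(1:ℝ)| • ((ψ a + v - ψ a) ^ r * (ψ t - (ψ a + v)) ^ (α-1))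
        = v ^ r * (X - v) ^ (α - 1) := by
      intro v _
      have e1 : ψ a + v - ψ a = v := by ring
      have e2 : ψ t - (ψ a + v) = X - v := by rw [hXdef]; ring
      rw [e1, e2]; simp
    rw [setIntegral_congr_fun measurableSet_Ioo hcongr,
      ← MeasureTheory.integral_Ioc_eq_integral_Ioo, ← intervalIntegral.integral_of_le hX.le]
    have hb := real_beta (p := r+1) (q := α) (by linarith) hα hX
    simp only [add_sub_cancel_right] at hb
    rw [hb]
    ring_nf
  have hbetaInt : ∀ r : ℝ, 0 ≤ r →
      IntegrableOn (fun u => (u - ψ a) ^ r * (ψ t - u) ^ (α - 1)) (Ioo (ψ a) (ψ t)) := by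
    intro r hr
    have h1 : IntervalIntegrable (fun u : ℝ => (ψ t - u) ^ (α - 1)) volume (ψ a) (ψ t) := by
      have h0 := intervalIntegral.intervalIntegrable_rpow' (a := 0) (b := X)
        (r := α - 1) (by linarith)
      have h2 := h0.comp_sub_left (ψ t)
      have e1 : ψ t - X = ψ a := by rw [hXdef]; ring
      rw [e1] at h2
      simpa using h2.symm
    have h3 : IntegrableOn (fun u : ℝ => (ψ t - u) ^ (α - 1)) (Ioo (ψ a) (ψ t)) :=
      h1.1.mono_set Ioo_subset_Ioc_self
    refine MeasureTheory.Integrable.bdd_mul (c := X ^ r) h3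
      (((continuous_id.sub continuous_const).rpow_const (fun x => Or.inr hr)).aestronglyMeasurable)
      ?_
    filter_upwards [ae_restrict_mem measurableSet_Ioo] with u hu
    rw [Real.norm_eq_abs, abs_of_nonneg (Real.rpow_nonneg (by linarith [hu.1]) r)]
    exact Real.rpow_le_rpow (by linarith [hu.1]) (by linarith [hu.2]) hr
  -- the term functions
  set f : ℝ → ℕ → ℝ → ℝ := fun l k τ => deriv ψ τ * (ψ t - ψ τ) ^ (α - 1) *
    (l ^ k * (ψ τ - ψ a) ^ ((k:ℝ) * α) / Real.Gamma ((k:ℝ) * α + 1)) with hfdef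
  have hΓk : ∀ k : ℕ, 0 < Real.Gamma ((k:ℝ) * α + 1) :=
    fun k => Real.Gamma_pos_of_pos (by positivity)
  have hfint : ∀ (l : ℝ) (k : ℕ), IntegrableOn (f l k) (Ioo a t) := by
    intro l k
    have h2 := (hchgInt _ (hbetaInt ((k:ℝ)*α) (by positivity))).const_mul
      (l ^ k / Real.Gamma ((k:ℝ)*α+1))
    refine MeasureTheory.IntegrableOn.congr_fun h2 (fun τ hτ => ?_) measurableSet_Ioo
    simp only [hfdef]
    ring
  have hIk : ∀ (l : ℝ) (k : ℕ), ∫ τ in Ioo a t, f l k τ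
      = l ^ k * X ^ ((k:ℝ)*α + α) * (Real.Gamma α / Real.Gamma ((k:ℝ)*α + 1 + α)) := by
    intro l k
    have h1 : ∫ τ in Ioo a t, f l k τ
        = (l ^ k / Real.Gamma ((k:ℝ)*α+1)) * ∫ τ in Ioo a t,
            deriv ψ τ * ((ψ τ - ψ a) ^ ((k:ℝ)*α) * (ψ t - ψ τ) ^ (α-1)) := by
      rw [← integral_const_mul]
      refine setIntegral_congr_fun measurableSet_Ioo (fun τ hτ => ?_)
      simp only [hfdef]
      ring
    rw [h1, ← hchg (fun u => (u - ψ a) ^ ((k:ℝ)*α) * (ψ t - u) ^ (α-1)),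
      hJ ((k:ℝ)*α) (by positivity)]
    field_simp
    try ring
  -- pointwise expansion of ML into the series
  have hpw : ∀ τ ∈ Ioo a t, deriv ψ τ * (ψ t - ψ τ) ^ (α - 1)
        * ML α (lam * (ψ τ - ψ a) ^ α) = ∑' k : ℕ, f lam k τ := by
    intro τ hτ
    have hy : (0:ℝ) ≤ ψ τ - ψ a :=
      sub_nonneg.mpr (hψmono hamem (hIccsub ⟨hτ.1.le, hτ.2.le⟩) hτ.1).le
    rw [ML, ← tsum_mul_left]
    refine tsum_congr (fun k => ?_)
    simp only [hfdef]
    rw [mul_pow, ← Real.rpow_natCast ((ψ τ - ψ a) ^ α) k, ← Real.rpow_mul hy,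
      mul_comm α (k:ℝ)]
    try ring
  -- summability of the norm series
  have hnormsum : ∑' k : ℕ, ∫⁻ τ in Ioo a t, ‖f lam k τ‖₊ ≠ ⊤ := by
    have habs : ∀ k : ℕ, ∫⁻ τ in Ioo a t, ‖f lam k τ‖₊
        = ENNReal.ofReal (∫ τ in Ioo a t, f |lam| k τ) := by
      intro k
      have hstep : ∫⁻ τ in Ioo a t, ‖f lam k τ‖₊
          = ∫⁻ τ in Ioo a t, ENNReal.ofReal (f |lam| k τ) := by
        refine lintegral_congr_ae ?_
        filter_upwards [ae_restrict_mem measurableSet_Ioo] with τ hτ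
        have hy : (0:ℝ) ≤ ψ τ - ψ a :=
          sub_nonneg.mpr (hψmono hamem (hIccsub ⟨hτ.1.le, hτ.2.le⟩) hτ.1).le
        rw [← ENNReal.ofReal_coe_nnreal, coe_nnnorm, Real.norm_eq_abs]
        congr 1
        simp only [hfdef]
        rw [abs_mul, abs_mul, abs_div, abs_mul, abs_pow,
          abs_of_nonneg (hderiv0 τ hτ), abs_of_nonneg (Real.rpow_nonneg (by linarith [hτ.2, sub_nonneg.mpr ((hψmono (hIccsub ⟨hτ.1.le, hτ.2.le⟩) ht hτ.2).le)]) _),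
          abs_of_nonneg (Real.rpow_nonneg hy _), abs_of_pos (hΓk k)]
      have hnn : (0:ℝ → ℝ) ≤ᵐ[volume.restrict (Ioo a t)] f |lam| k := by
        filter_upwards [ae_restrict_mem measurableSet_Ioo] with τ hτ
        have hy : (0:ℝ) ≤ ψ τ - ψ a :=
          sub_nonneg.mpr (hψmono hamem (hIccsub ⟨hτ.1.le, hτ.2.le⟩) hτ.1).le
        have hy2 : (0:ℝ) ≤ ψ t - ψ τ :=
          sub_nonneg.mpr (hψmono (hIccsub ⟨hτ.1.le, hτ.2.le⟩) ht hτ.2).le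
        have hd0 := hderiv0 τ hτ
        simp only [Pi.zero_apply, hfdef]
        positivity
      rw [hstep, ← MeasureTheory.ofReal_integral_eq_lintegral_ofReal (hfint |lam| k) hnn]
    simp_rw [habs, hIk]
    set c : ℕ → ℝ := fun k =>
      |lam| ^ k * X ^ ((k:ℝ)*α + α) * (Real.Gamma α / Real.Gamma ((k:ℝ)*α + 1 + α)) with hcdef
    have hcnn : ∀ k, 0 ≤ c k := by
      intro k
      have := Real.Gamma_pos_of_pos (show (0:ℝ) < (k:ℝ)*α+1+α by positivity)
      simp only [hcdef]
      positivity
    have hcsum : Summable c := by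
      have hs := ML_summable hα (|lam| * X ^ α)
      have hs1 : Summable (fun k : ℕ => (|lam| * X ^ α) ^ (k+1)
          / Real.Gamma ((((k:ℕ)+1 : ℕ):ℝ) * α + 1)) := (summable_nat_add_iff 1).mpr hs
      refine (hs1.mul_left (Real.Gamma α / |lam|)).congr (fun k => ?_)
      simp only [hcdef]
      have he : ((((k:ℕ)+1 : ℕ)):ℝ) * α + 1 = (k:ℝ)*α + 1 + α := by push_cast; ring
      have hXe : X ^ ((k:ℝ)*α + α) = (X ^ α) ^ (k+1) := by
        rw [← Real.rpow_natCast (X ^ α) (k+1), ← Real.rpow_mul hX.le]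
        congr 1
        push_cast; ring
      have hG := Real.Gamma_pos_of_pos (show (0:ℝ) < (k:ℝ)*α+1+α by positivity)
      rw [he, hXe, mul_pow]
      have hl : |lam| ≠ 0 := abs_ne_zero.mpr hlam
      field_simp
      ring
    rw [← ENNReal.ofReal_tsum_of_nonneg hcnn hcsum]
    exact ENNReal.ofReal_ne_top
  -- assemble
  rw [psiInt, intervalIntegral.integral_of_le hat.le, MeasureTheory.integral_Ioc_eq_integral_Ioo,
    setIntegral_congr_fun measurableSet_Ioo hpw,
    MeasureTheory.integral_tsum (fun k => (hfint lam k).aestronglyMeasurable) hnormsum]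
  simp_rw [hIk lam]
  -- RHS series expansion
  have hRHS : ML α (lam * X ^ α)
      = 1 + ∑' k : ℕ, (lam * X ^ α) ^ (k+1) / Real.Gamma ((((k:ℕ)+1:ℕ):ℝ) * α + 1) := by
    rw [ML, Summable.tsum_eq_zero_add (ML_summable hα (lam * X ^ α))]
    congr 1
    norm_num [Real.Gamma_one]
  rw [hXdef] at hRHS ⊢
  rw [hRHS, add_sub_cancel_left, ← tsum_mul_left, ← tsum_mul_left]
  refine tsum_congr (fun k => ?_)
  have he : ((((k:ℕ)+1 : ℕ)):ℝ) * α + 1 = (k:ℝ)*α + 1 + α := by push_cast; ring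
  have hXe : (ψ t - ψ a) ^ ((k:ℝ)*α + α) = ((ψ t - ψ a) ^ α) ^ (k+1) := by
    rw [← Real.rpow_natCast ((ψ t - ψ a) ^ α) (k+1), ← Real.rpow_mul hX.le]
    congr 1
    push_cast; ring
  have hG := Real.Gamma_pos_of_pos (show (0:ℝ) < (k:ℝ)*α+1+α by positivity)
  rw [he, hXe, mul_pow]
  field_simp
  ring

end MainML
end

section
/- Let x ∈ B_R := {x ∈ C[a,b] : ‖x‖_∞ ≤ R} and suppose the growth and radius hypotheses of the Leray–Schauder existence theorem hold. Then the operator F defined by F(x)(t) := I_{a+}^{α,ψ} f(t,x(t)) + x_a + (x_a¹/ψ'(a))(ψ(t)−ψ(a)) + γ_x(ψ(t)−ψ(a))² maps B_R into B_R, i.e. ‖F(x)‖_∞ ≤ R. -/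
open Real Set

namespace FopAux

variable {a b : ℝ} {ψ : ℝ → ℝ}

lemma phi_cont (hab : a < b) (hψdiff : ContDiffOn ℝ 1 ψ (Icc a b)) :
    ContinuousOn (derivWithin ψ (Icc a b)) (Icc a b) :=
  hψdiff.continuousOn_derivWithin (uniqueDiffOn_Icc hab) le_rfl

lemma phi_nonneg (hab : a < b) (hψdiff : ContDiffOn ℝ 1 ψ (Icc a b))
    (hψ' : ∀ t ∈ Icc a b, 0 < deriv ψ t) :
    ∀ τ ∈ Icc a b, 0 ≤ derivWithin ψ (Icc a b) τ := by
  intro τ hτ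
  have hcl : τ ∈ closure (Ioo a b) := by rwa [closure_Ioo hab.ne]
  have hne : (nhdsWithin τ (Ioo a b)).NeBot := mem_closure_iff_nhdsWithin_neBot.1 hcl
  have htend : Filter.Tendsto (derivWithin ψ (Icc a b)) (nhdsWithin τ (Ioo a b))
      (nhds (derivWithin ψ (Icc a b) τ)) :=
    (phi_cont hab hψdiff τ hτ).mono Ioo_subset_Icc_self
  refine ge_of_tendsto htend ?_
  filter_upwards [self_mem_nhdsWithin] with s hs
  rw [derivWithin_of_mem_nhds (Icc_mem_nhds hs.1 hs.2)]
  exact (hψ' s (Ioo_subset_Icc_self hs)).le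

lemma integral_congr_phi (hab : a < b) {t : ℝ} (ht : t ∈ Icc a b) (β : ℝ) (u : ℝ → ℝ) :
    (∫ τ in a..t, deriv ψ τ * (ψ t - ψ τ) ^ β * u τ)
      = ∫ τ in a..t, derivWithin ψ (Icc a b) τ * (ψ t - ψ τ) ^ β * u τ := by
  refine intervalIntegral.integral_congr_ae ?_
  have h1 : ∀ᵐ τ : ℝ, τ ≠ t := by
    rw [MeasureTheory.ae_iff]
    simpa [not_not] using Real.volume_singleton (a := t)
  filter_upwards [h1] with τ hne hmem
  rw [Set.uIoc_of_le ht.1] at hmem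
  have hτ : τ ∈ Ioo a b := ⟨hmem.1, lt_of_lt_of_le (lt_of_le_of_ne hmem.2 hne) ht.2⟩
  rw [derivWithin_of_mem_nhds (Icc_mem_nhds hτ.1 hτ.2)]


lemma integrable_phi (hab : a < b) (hψdiff : ContDiffOn ℝ 1 ψ (Icc a b))
    {t : ℝ} (ht : t ∈ Icc a b) {β : ℝ} (hβ : 0 ≤ β)
    {u : ℝ → ℝ} (hu : ContinuousOn u (Icc a b)) :
    IntervalIntegrable (fun τ => derivWithin ψ (Icc a b) τ * (ψ t - ψ τ) ^ β * u τ)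
      MeasureTheory.volume a t := by
  apply ContinuousOn.intervalIntegrable
  rw [Set.uIcc_of_le ht.1]
  have hsub : Icc a t ⊆ Icc a b := Icc_subset_Icc le_rfl ht.2
  refine (((phi_cont hab hψdiff).mono hsub).mul ?_).mul (hu.mono hsub)
  exact (continuousOn_const.sub (hψdiff.continuousOn.mono hsub)).rpow_const
    (fun τ _ => Or.inr hβ)

lemma psiInt_eq_phi (hab : a < b) {t : ℝ} (ht : t ∈ Icc a b) (α' : ℝ) (u : ℝ → ℝ) :
    psiInt ψ a α' u t = (1 / Real.Gamma α') *
      ∫ τ in a..t, derivWithin ψ (Icc a b) τ * (ψ t - ψ τ) ^ (α' - 1) * u τ := by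
  rw [psiInt, integral_congr_phi hab ht]

lemma abs_psiInt_le (hab : a < b) (hψmono : StrictMonoOn ψ (Icc a b))
    (hψdiff : ContDiffOn ℝ 1 ψ (Icc a b)) (hψ' : ∀ t ∈ Icc a b, 0 < deriv ψ t)
    {α' : ℝ} (hα' : 0 < α') (hβ : 0 ≤ α' - 1)
    {t : ℝ} (ht : t ∈ Icc a b) {g h : ℝ → ℝ} (hg : ContinuousOn g (Icc a b))
    (hh : ContinuousOn h (Icc a b)) (hle : ∀ s ∈ Icc a b, |g s| ≤ h s) :
    |psiInt ψ a α' g t| ≤ psiInt ψ a α' h t := by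
  rw [psiInt_eq_phi hab ht, psiInt_eq_phi hab ht, abs_mul]
  have hΓ : 0 < Real.Gamma α' := Real.Gamma_pos_of_pos hα'
  rw [abs_of_pos (by positivity : (0:ℝ) < 1 / Real.Gamma α')]
  refine mul_le_mul_of_nonneg_left ?_ (by positivity)
  have hsub : Icc a t ⊆ Icc a b := Icc_subset_Icc le_rfl ht.2
  have hptle : ∀ τ ∈ Icc a t,
      |derivWithin ψ (Icc a b) τ * (ψ t - ψ τ) ^ (α' - 1) * g τ|
        ≤ derivWithin ψ (Icc a b) τ * (ψ t - ψ τ) ^ (α' - 1) * h τ := by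
    intro τ hτ
    have hτb := hsub hτ
    have hφ := phi_nonneg hab hψdiff hψ' τ hτb
    have hW : (0:ℝ) ≤ (ψ t - ψ τ) ^ (α' - 1) := by
      apply Real.rpow_nonneg
      have : ψ τ ≤ ψ t := hψmono.monotoneOn hτb ht hτ.2
      linarith
    rw [abs_mul, abs_mul, abs_of_nonneg hφ, abs_of_nonneg hW]
    exact mul_le_mul_of_nonneg_left (hle τ hτb) (by positivity)
  calc |∫ τ in a..t, derivWithin ψ (Icc a b) τ * (ψ t - ψ τ) ^ (α' - 1) * g τ|
      ≤ ∫ τ in a..t, |derivWithin ψ (Icc a b) τ * (ψ t - ψ τ) ^ (α' - 1) * g τ| :=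
        intervalIntegral.abs_integral_le_integral_abs ht.1
    _ ≤ _ := by
        refine intervalIntegral.integral_mono_on ht.1 ?_
          (integrable_phi hab hψdiff ht hβ hh) hptle
        have : ContinuousOn
            (fun τ => |derivWithin ψ (Icc a b) τ * (ψ t - ψ τ) ^ (α' - 1) * g τ|)
            (Icc a t) := by
          apply ContinuousOn.abs
          have := integrable_phi hab hψdiff ht hβ hg
          refine (((phi_cont hab hψdiff).mono hsub).mul ?_).mul (hg.mono hsub)
          exact (continuousOn_const.sub (hψdiff.continuousOn.mono hsub)).rpow_const
            (fun τ _ => Or.inr hβ)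
        exact this.intervalIntegrable_of_Icc ht.1

lemma psiInt_comb (hab : a < b) (hψdiff : ContDiffOn ℝ 1 ψ (Icc a b))
    {α' : ℝ} (hβ : 0 ≤ α' - 1) {t : ℝ} (ht : t ∈ Icc a b) (c : ℝ)
    {u w : ℝ → ℝ} (hu : ContinuousOn u (Icc a b)) (hw : ContinuousOn w (Icc a b)) :
    psiInt ψ a α' (fun s => u s * c + w s) t
      = psiInt ψ a α' u t * c + psiInt ψ a α' w t := by
  rw [psiInt_eq_phi hab ht, psiInt_eq_phi hab ht, psiInt_eq_phi hab ht]
  have h1 : (∫ τ in a..t, derivWithin ψ (Icc a b) τ * (ψ t - ψ τ) ^ (α' - 1)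
      * (u τ * c + w τ))
      = ∫ τ in a..t, (c * (derivWithin ψ (Icc a b) τ * (ψ t - ψ τ) ^ (α' - 1) * u τ)
        + derivWithin ψ (Icc a b) τ * (ψ t - ψ τ) ^ (α' - 1) * w τ) := by
    apply intervalIntegral.integral_congr
    intro τ _
    ring
  rw [h1, intervalIntegral.integral_add ((integrable_phi hab hψdiff ht hβ hu).const_mul c)
    (integrable_phi hab hψdiff ht hβ hw), intervalIntegral.integral_const_mul]
  ring

lemma psiInt_nonneg (hψmono : StrictMonoOn ψ (Icc a b))
    (hψ' : ∀ t ∈ Icc a b, 0 < deriv ψ t) {α' : ℝ} (hα' : 0 < α')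
    {t : ℝ} (ht : t ∈ Icc a b) {h : ℝ → ℝ} (hh : ∀ s ∈ Icc a b, 0 ≤ h s) :
    0 ≤ psiInt ψ a α' h t := by
  have hΓ : 0 < Real.Gamma α' := Real.Gamma_pos_of_pos hα'
  refine mul_nonneg (by positivity) ?_
  refine intervalIntegral.integral_nonneg ht.1 ?_
  intro τ hτ
  have hτb : τ ∈ Icc a b := Icc_subset_Icc le_rfl ht.2 hτ
  have h1 := (hψ' τ hτb).le
  have h2 : (0:ℝ) ≤ (ψ t - ψ τ) ^ (α' - 1) := by
    apply Real.rpow_nonneg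
    have : ψ τ ≤ ψ t := hψmono.monotoneOn hτb ht hτ.2
    linarith
  have h3 := hh τ hτb
  positivity

lemma bddAbove_psiInt (hab : a < b) (hψmono : StrictMonoOn ψ (Icc a b))
    (hψdiff : ContDiffOn ℝ 1 ψ (Icc a b))
    {α' : ℝ} (hα' : 0 < α') (hβ : 0 ≤ α' - 1)
    {u : ℝ → ℝ} (hu : ContinuousOn u (Icc a b)) :
    BddAbove ((fun t => psiInt ψ a α' u t) '' Icc a b) := by
  obtain ⟨C₁, hC₁⟩ := isCompact_Icc.exists_bound_of_continuousOn (phi_cont hab hψdiff)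
  obtain ⟨C₂, hC₂⟩ := isCompact_Icc.exists_bound_of_continuousOn hu
  have hC₁0 : 0 ≤ C₁ := le_trans (norm_nonneg _) (hC₁ a ⟨le_rfl, hab.le⟩)
  have hC₂0 : 0 ≤ C₂ := le_trans (norm_nonneg _) (hC₂ a ⟨le_rfl, hab.le⟩)
  have hΓ : 0 < Real.Gamma α' := Real.Gamma_pos_of_pos hα'
  refine ⟨(1 / Real.Gamma α') * (C₁ * (ψ b - ψ a) ^ (α' - 1) * C₂ * (b - a)), ?_⟩
  rintro y ⟨t, ht, rfl⟩
  simp only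
  rw [psiInt_eq_phi hab ht]
  have hWb : (0:ℝ) ≤ (ψ b - ψ a) ^ (α' - 1) := by
    apply Real.rpow_nonneg
    have : ψ a ≤ ψ b := hψmono.monotoneOn ⟨le_rfl, hab.le⟩ ⟨hab.le, le_rfl⟩ hab.le
    linarith
  have key : ‖∫ τ in a..t, derivWithin ψ (Icc a b) τ * (ψ t - ψ τ) ^ (α' - 1) * u τ‖
      ≤ C₁ * (ψ b - ψ a) ^ (α' - 1) * C₂ * |t - a| := by
    apply intervalIntegral.norm_integral_le_of_norm_le_const
    intro τ hτ
    rw [Set.uIoc_of_le ht.1] at hτ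
    have hτb : τ ∈ Icc a b := ⟨hτ.1.le, le_trans hτ.2 ht.2⟩
    have h1 : ψ τ ≤ ψ t := hψmono.monotoneOn hτb ht hτ.2
    have h2 : ψ a ≤ ψ τ := hψmono.monotoneOn ⟨le_rfl, hab.le⟩ hτb hτb.1
    have h3 : ψ t ≤ ψ b := hψmono.monotoneOn ht ⟨hab.le, le_rfl⟩ ht.2
    have hW : |(ψ t - ψ τ) ^ (α' - 1)| ≤ (ψ b - ψ a) ^ (α' - 1) := by
      rw [abs_of_nonneg (Real.rpow_nonneg (by linarith) _)]
      exact Real.rpow_le_rpow (by linarith) (by linarith) hβ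
    rw [Real.norm_eq_abs, abs_mul, abs_mul]
    have e1 : |derivWithin ψ (Icc a b) τ| ≤ C₁ := hC₁ τ hτb
    have e2 : |u τ| ≤ C₂ := hC₂ τ hτb
    gcongr
  have habs : (∫ τ in a..t, derivWithin ψ (Icc a b) τ * (ψ t - ψ τ) ^ (α' - 1) * u τ)
      ≤ C₁ * (ψ b - ψ a) ^ (α' - 1) * C₂ * (b - a) := by
    refine le_trans (le_abs_self _) (le_trans key ?_)
    have : |t - a| ≤ b - a := by
      rw [abs_of_nonneg (by linarith [ht.1])]
      linarith [ht.2]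
    gcongr
  exact mul_le_mul_of_nonneg_left habs (by positivity)

end FopAux

/-- the operator F maps the closed ball B_R into itself. -/
theorem Fop_maps_ball (a b v α K xa xa1 R : ℝ) (ψ : ℝ → ℝ)
    (f : ℝ → ℝ → ℝ) (F₁ F₂ : ℝ → ℝ) (Lam : ℝ → ℝ) (hab : a < b) (hv : v ∈ Ioc a b)
    (hψmono : StrictMonoOn ψ (Icc a b)) (hψdiff : ContDiffOn ℝ 1 ψ (Icc a b))
    (hψ' : ∀ t ∈ Icc a b, 0 < deriv ψ t)
    (hα : α ∈ Set.Ioo (2 : ℝ) 3) (hK : 0 < K)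
    (hf : ContinuousOn (fun p : ℝ × ℝ => f p.1 p.2) (Icc a b ×ˢ univ))
    (hN : 0 < 2 * K / Real.Gamma (3 + α) * (ψ v - ψ a) ^ (2 + α) - (ψ b - ψ a) ^ 2)
    (hF₁ : ContinuousOn F₁ (Icc a b)) (hF₂ : ContinuousOn F₂ (Icc a b))
    (hLam : ∀ r s : ℝ, 0 ≤ r → r ≤ s → Lam r ≤ Lam s) (hLam0 : ∀ r : ℝ, 0 ≤ Lam r)
    (hgrowth : ∀ t ∈ Icc a b, ∀ y : ℝ, |f t y| ≤ F₁ t * Lam |y| + F₂ t)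
    (hR : 0 < R)
    (hball :
      ((⨆ t ∈ Icc a b, psiInt ψ a α (fun s => |F₁ s|) t)
          + (psiInt ψ a α (fun s => |F₁ s|) b + K * psiInt ψ a (2 * α) (fun s => |F₁ s|) v)
            * (ψ b - ψ a) ^ 2
            / (2 * K / Real.Gamma (3 + α) * (ψ v - ψ a) ^ (2 + α) - (ψ b - ψ a) ^ 2))
          * Lam R
        + ((⨆ t ∈ Icc a b, psiInt ψ a α (fun s => |F₂ s|) t)
          + (psiInt ψ a α (fun s => |F₂ s|) b + K * psiInt ψ a (2 * α) (fun s => |F₂ s|) v)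
            * (ψ b - ψ a) ^ 2
            / (2 * K / Real.Gamma (3 + α) * (ψ v - ψ a) ^ (2 + α) - (ψ b - ψ a) ^ 2))
        + |xa| + |xa1| / deriv ψ a * (ψ b - ψ a)
        + |xa * (1 - K / Real.Gamma (1 + α) * (ψ v - ψ a) ^ α)
            + xa1 / deriv ψ a
              * (ψ b - ψ a - K / Real.Gamma (2 + α) * (ψ v - ψ a) ^ (1 + α))|
          * (ψ b - ψ a) ^ 2
          / (2 * K / Real.Gamma (3 + α) * (ψ v - ψ a) ^ (2 + α) - (ψ b - ψ a) ^ 2)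
        ≤ R) :
    ∀ x : ℝ → ℝ, ContinuousOn x (Icc a b) → (∀ t ∈ Icc a b, |x t| ≤ R) →
      ∀ t ∈ Icc a b,
        |Fop ψ a b v α K xa xa1
            (2 * K / Real.Gamma (3 + α) * (ψ v - ψ a) ^ (2 + α) - (ψ b - ψ a) ^ 2)
            f x t| ≤ R := by
  intro x hx hxR t ht
  obtain ⟨hα2, hα3⟩ := hα
  set N := 2 * K / Real.Gamma (3 + α) * (ψ v - ψ a) ^ (2 + α) - (ψ b - ψ a) ^ 2 with hNdef
  set A := xa * (1 - K / Real.Gamma (1 + α) * (ψ v - ψ a) ^ α)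
    + xa1 / deriv ψ a * (ψ b - ψ a - K / Real.Gamma (2 + α) * (ψ v - ψ a) ^ (1 + α)) with hA
  set s₁ := ⨆ t ∈ Icc a b, psiInt ψ a α (fun s => |F₁ s|) t with hs₁
  set s₂ := ⨆ t ∈ Icc a b, psiInt ψ a α (fun s => |F₂ s|) t with hs₂
  set i₁ := psiInt ψ a α (fun s => |F₁ s|) b with hi₁
  set i₂ := psiInt ψ a α (fun s => |F₂ s|) b with hi₂
  set j₁ := psiInt ψ a (2 * α) (fun s => |F₁ s|) v with hj₁
  set j₂ := psiInt ψ a (2 * α) (fun s => |F₂ s|) v with hj₂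
  have hv' : v ∈ Icc a b := ⟨hv.1.le, hv.2⟩
  have hb' : b ∈ Icc a b := ⟨hab.le, le_rfl⟩
  have ha' : a ∈ Icc a b := ⟨le_rfl, hab.le⟩
  have hα0 : 0 < α := by linarith
  have hβ1 : 0 ≤ α - 1 := by linarith
  have hα0' : 0 < 2 * α := by linarith
  have hβ2 : 0 ≤ 2 * α - 1 := by linarith
  have hL0 : 0 ≤ Lam R := hLam0 R
  have hgx : ContinuousOn (fun s => f s (x s)) (Icc a b) := by
    have h1 : ContinuousOn (fun s => ((s, x s) : ℝ × ℝ)) (Icc a b) :=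
      continuousOn_id.prodMk hx
    exact hf.comp h1 (fun s hs => ⟨hs, mem_univ _⟩)
  have hF₁a : ContinuousOn (fun s => |F₁ s|) (Icc a b) := hF₁.abs
  have hF₂a : ContinuousOn (fun s => |F₂ s|) (Icc a b) := hF₂.abs
  have hhC : ContinuousOn (fun s => |F₁ s| * Lam R + |F₂ s|) (Icc a b) :=
    (hF₁a.mul continuousOn_const).add hF₂a
  have hle : ∀ s ∈ Icc a b, |f s (x s)| ≤ |F₁ s| * Lam R + |F₂ s| := by
    intro s hs
    have h0 := hgrowth s hs (x s)
    have h1 : Lam |x s| ≤ Lam R := hLam _ _ (abs_nonneg _) (hxR s hs)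
    have h2 : 0 ≤ Lam |x s| := hLam0 _
    have h3 : F₁ s * Lam |x s| ≤ |F₁ s| * Lam R :=
      le_trans (mul_le_mul_of_nonneg_right (le_abs_self _) h2)
        (mul_le_mul_of_nonneg_left h1 (abs_nonneg _))
    have h4 := le_abs_self (F₂ s)
    linarith
  have hbound : ∀ α' : ℝ, 0 < α' → 0 ≤ α' - 1 → ∀ s ∈ Icc a b,
      |psiInt ψ a α' (fun s => f s (x s)) s|
        ≤ psiInt ψ a α' (fun s => |F₁ s|) s * Lam R
          + psiInt ψ a α' (fun s => |F₂ s|) s := by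
    intro α' h1 h2 s hs
    have h3 := FopAux.abs_psiInt_le hab hψmono hψdiff hψ' h1 h2 hs hgx hhC hle
    rwa [FopAux.psiInt_comb hab hψdiff h2 hs (Lam R) hF₁a hF₂a] at h3
  have hIt := hbound α hα0 hβ1 t ht
  have hIb := hbound α hα0 hβ1 b hb'
  have hJv := hbound (2 * α) hα0' hβ2 v hv'
  have hSle : ∀ u : ℝ → ℝ, ContinuousOn u (Icc a b) →
      psiInt ψ a α u t ≤ ⨆ r ∈ Icc a b, psiInt ψ a α u r := by
    intro u hu
    obtain ⟨C, hC⟩ := FopAux.bddAbove_psiInt hab hψmono hψdiff hα0 hβ1 hu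
    have hrange : BddAbove (Set.range fun r => ⨆ _ : r ∈ Icc a b, psiInt ψ a α u r) := by
      refine ⟨max C 0, ?_⟩
      rintro y ⟨r, rfl⟩
      dsimp only
      by_cases hr : r ∈ Icc a b
      · rw [ciSup_pos hr]
        exact le_max_of_le_left (hC (mem_image_of_mem (fun z => psiInt ψ a α u z) hr))
      · haveI : IsEmpty (r ∈ Icc a b) := ⟨hr⟩
        rw [show (⨆ _ : r ∈ Icc a b, psiInt ψ a α u r) = 0 from Real.iSup_of_isEmpty _]
        exact le_max_right _ _
    refine le_ciSup_of_le hrange t ?_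
    rw [ciSup_pos ht]
  have hS₁ : psiInt ψ a α (fun s => |F₁ s|) t ≤ s₁ := hSle _ hF₁a
  have hS₂ : psiInt ψ a α (fun s => |F₂ s|) t ≤ s₂ := hSle _ hF₂a
  have hψat : ψ a ≤ ψ t := hψmono.monotoneOn ha' ht ht.1
  have hψtb : ψ t ≤ ψ b := hψmono.monotoneOn ht hb' ht.2
  have hψ'a : 0 < deriv ψ a := hψ' a ha'
  have hγ : |gammaX ψ a b v α K xa xa1 N f x|
      ≤ (i₁ * Lam R + i₂ + K * (j₁ * Lam R + j₂) + |A|) / N := by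
    rw [gammaX, abs_div, abs_of_pos hN]
    gcongr
    have e : psiInt ψ a α (fun s => f s (x s)) b
        - K * psiInt ψ a (2 * α) (fun s => f s (x s)) v
        + xa * (1 - K / Real.Gamma (1 + α) * (ψ v - ψ a) ^ α)
        + xa1 / deriv ψ a
          * (ψ b - ψ a - K / Real.Gamma (2 + α) * (ψ v - ψ a) ^ (1 + α))
        = (psiInt ψ a α (fun s => f s (x s)) b
          - K * psiInt ψ a (2 * α) (fun s => f s (x s)) v) + A := by
      rw [hA]; ring
    rw [e]
    have t1 := abs_add_le (psiInt ψ a α (fun s => f s (x s)) b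
      - K * psiInt ψ a (2 * α) (fun s => f s (x s)) v) A
    have t2 := abs_sub (psiInt ψ a α (fun s => f s (x s)) b)
      (K * psiInt ψ a (2 * α) (fun s => f s (x s)) v)
    rw [abs_mul, abs_of_pos hK] at t2
    have t3 : K * |psiInt ψ a (2 * α) (fun s => f s (x s)) v|
        ≤ K * (j₁ * Lam R + j₂) := mul_le_mul_of_nonneg_left hJv hK.le
    linarith
  rw [Fop]
  have e1 : |xa1 / deriv ψ a * (ψ t - ψ a)| = |xa1| / deriv ψ a * (ψ t - ψ a) := by
    rw [abs_mul, abs_div, abs_of_pos hψ'a, abs_of_nonneg (by linarith : (0:ℝ) ≤ ψ t - ψ a)]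
  have e2 : |gammaX ψ a b v α K xa xa1 N f x * (ψ t - ψ a) ^ 2|
      = |gammaX ψ a b v α K xa xa1 N f x| * (ψ t - ψ a) ^ 2 := by
    rw [abs_mul, abs_of_nonneg (sq_nonneg (ψ t - ψ a))]
  have tri : |psiInt ψ a α (fun s => f s (x s)) t + xa + xa1 / deriv ψ a * (ψ t - ψ a)
      + gammaX ψ a b v α K xa xa1 N f x * (ψ t - ψ a) ^ 2|
      ≤ |psiInt ψ a α (fun s => f s (x s)) t| + |xa| + |xa1| / deriv ψ a * (ψ t - ψ a)
        + |gammaX ψ a b v α K xa xa1 N f x| * (ψ t - ψ a) ^ 2 := by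
    have u1 := abs_add_le (psiInt ψ a α (fun s => f s (x s)) t + xa
      + xa1 / deriv ψ a * (ψ t - ψ a))
      (gammaX ψ a b v α K xa xa1 N f x * (ψ t - ψ a) ^ 2)
    have u2 := abs_add_le (psiInt ψ a α (fun s => f s (x s)) t + xa)
      (xa1 / deriv ψ a * (ψ t - ψ a))
    have u3 := abs_add_le (psiInt ψ a α (fun s => f s (x s)) t) xa
    rw [e1] at u2
    rw [e2] at u1
    linarith
  have m1 : |psiInt ψ a α (fun s => f s (x s)) t| ≤ s₁ * Lam R + s₂ := by
    have := mul_le_mul_of_nonneg_right hS₁ hL0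
    linarith
  have m2 : |xa1| / deriv ψ a * (ψ t - ψ a) ≤ |xa1| / deriv ψ a * (ψ b - ψ a) :=
    mul_le_mul_of_nonneg_left (by linarith) (by positivity)
  have m3 : |gammaX ψ a b v α K xa xa1 N f x| * (ψ t - ψ a) ^ 2
      ≤ |gammaX ψ a b v α K xa xa1 N f x| * (ψ b - ψ a) ^ 2 := by
    refine mul_le_mul_of_nonneg_left ?_ (abs_nonneg _)
    have h1 : (0:ℝ) ≤ ψ t - ψ a := by linarith
    have h2 : ψ t - ψ a ≤ ψ b - ψ a := by linarith
    exact pow_le_pow_left₀ h1 h2 2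
  have m4 : |gammaX ψ a b v α K xa xa1 N f x| * (ψ b - ψ a) ^ 2
      ≤ (i₁ * Lam R + i₂ + K * (j₁ * Lam R + j₂) + |A|) / N * (ψ b - ψ a) ^ 2 :=
    mul_le_mul_of_nonneg_right hγ (sq_nonneg _)
  have hNne : N ≠ 0 := ne_of_gt hN
  have key : (i₁ * Lam R + i₂ + K * (j₁ * Lam R + j₂) + |A|) / N * (ψ b - ψ a) ^ 2
      = (i₁ + K * j₁) * (ψ b - ψ a) ^ 2 / N * Lam R
        + (i₂ + K * j₂) * (ψ b - ψ a) ^ 2 / N + |A| * (ψ b - ψ a) ^ 2 / N := by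
    field_simp
    ring
  have eball : (s₁ + (i₁ + K * j₁) * (ψ b - ψ a) ^ 2 / N) * Lam R
      = s₁ * Lam R + (i₁ + K * j₁) * (ψ b - ψ a) ^ 2 / N * Lam R := by ring
  linarith
end

section
/- Under the hypotheses of the Leray–Schauder existence theorem, the image F(B_R) of the closed ball B_R under the operator F is equicontinuous; in particular, for x ∈ B_R and a ≤ t₂ < t₁ ≤ b, |F(x)(t₁) − F(x)(t₂)| ≤ (M/Γ(α+1))[(ψ(t₁)−ψ(a))^α − (ψ(t₂)−ψ(a))^α] + (|x_a¹|/ψ'(a))(ψ(t₁)−ψ(t₂)) + |γ_x|[(ψ(t₁)−ψ(a))² − (ψ(t₂)−ψ(a))²], where M := max{|f(t,x)| : t ∈ [a,b], |x| ≤ R}. -/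
open Real Set

open MeasureTheory intervalIntegral

lemma ker_intble {a b α : ℝ} {ψ : ℝ → ℝ} (hab : a < b)
    (hψdiff : ContDiffOn ℝ 1 ψ (Icc a b)) (hα1 : (0:ℝ) ≤ α - 1) {s t c : ℝ}
    (has : a ≤ s) (hst : s ≤ t) (htb : t ≤ b) :
    IntervalIntegrable (fun τ => deriv ψ τ * (ψ c - ψ τ) ^ (α - 1)) volume s t := by
  have hsub : Icc s t ⊆ Icc a b := Icc_subset_Icc has htb
  have hφ : ContinuousOn (derivWithin ψ (Icc a b)) (Icc a b) :=
    hψdiff.continuousOn_derivWithin (uniqueDiffOn_Icc hab) le_rfl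
  have hψc : ContinuousOn ψ (Icc a b) := hψdiff.continuousOn
  have hG : ContinuousOn (fun τ => derivWithin ψ (Icc a b) τ * (ψ c - ψ τ) ^ (α - 1))
      (Icc s t) :=
    (hφ.mono hsub).mul ((continuousOn_const.sub (hψc.mono hsub)).rpow_const
      fun x _ => Or.inr hα1)
  refine (hG.intervalIntegrable_of_Icc hst).congr_ae ?_
  have hb0 : (volume : Measure ℝ) {b} = 0 := volume_singleton
  have h1 : ∀ᵐ τ ∂(volume : Measure ℝ), τ ∉ ({b} : Set ℝ) := by
    rw [ae_iff]; simpa using hb0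
  filter_upwards [ae_restrict_of_ae h1, ae_restrict_mem measurableSet_uIoc] with τ hτb hτm
  have hτm' : τ ∈ Ioc s t := by rwa [uIoc_of_le hst] at hτm
  have hτab : τ ∈ Ioo a b := ⟨lt_of_le_of_lt has hτm'.1,
    lt_of_le_of_ne (hτm'.2.trans htb) (by simpa using hτb)⟩
  rw [derivWithin_of_mem_nhds (Icc_mem_nhds hτab.1 hτab.2)]

lemma ker_integral {a b α : ℝ} {ψ : ℝ → ℝ} (hab : a < b)
    (hψmono : StrictMonoOn ψ (Icc a b)) (hψdiff : ContDiffOn ℝ 1 ψ (Icc a b))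
    (hα1 : 1 ≤ α) {s t c : ℝ} (has : a ≤ s) (hst : s ≤ t) (htc : t ≤ c) (hcb : c ≤ b) :
    ∫ τ in s..t, deriv ψ τ * (ψ c - ψ τ) ^ (α - 1) =
      ((ψ c - ψ s) ^ α - (ψ c - ψ t) ^ α) / α := by
  have hα0 : α ≠ 0 := by linarith
  have hψc : ContinuousOn ψ (Icc a b) := hψdiff.continuousOn
  have hsub : Icc s t ⊆ Icc a b := Icc_subset_Icc has (htc.trans hcb)
  have hF : ContinuousOn (fun τ => -((ψ c - ψ τ) ^ α) / α) (Icc s t) :=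
    (((continuousOn_const.sub (hψc.mono hsub)).rpow_const
      fun x _ => Or.inr (by linarith)).neg).div_const α
  have hderiv : ∀ τ ∈ Ioo s t, HasDerivAt (fun τ => -((ψ c - ψ τ) ^ α) / α)
      (deriv ψ τ * (ψ c - ψ τ) ^ (α - 1)) τ := by
    intro τ hτ
    have hτab : τ ∈ Ioo a b := ⟨lt_of_le_of_lt has hτ.1,
      lt_of_lt_of_le hτ.2 (htc.trans hcb)⟩
    have hψd : HasDerivAt ψ (deriv ψ τ) τ :=
      ((hψdiff.contDiffAt (Icc_mem_nhds hτab.1 hτab.2)).differentiableAt one_ne_zero).hasDerivAt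
    have hpos : 0 < ψ c - ψ τ := sub_pos.mpr
      (hψmono ⟨hτab.1.le, hτab.2.le⟩ ⟨has.trans (hst.trans htc), hcb⟩ (lt_of_lt_of_le hτ.2 htc))
    have hu : HasDerivAt (fun τ => ψ c - ψ τ) (-deriv ψ τ) τ := by
      exact ((hasDerivAt_const τ (ψ c)).sub hψd).congr_deriv (zero_sub _)
    have hr := (Real.hasDerivAt_rpow_const (p := α) (Or.inl hpos.ne')).comp τ hu
    have h2 := hr.neg.div_const α
    refine h2.congr_deriv ?_
    field_simp
  have hint := ker_intble (α := α) (c := c) hab hψdiff (by linarith) has hst (htc.trans hcb)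
  rw [integral_eq_sub_of_hasDerivAt_of_le hst hF hderiv hint]
  ring

lemma psiInt_diff_bound {a b α M : ℝ} {ψ g : ℝ → ℝ} (hab : a < b)
    (hψmono : StrictMonoOn ψ (Icc a b)) (hψdiff : ContDiffOn ℝ 1 ψ (Icc a b))
    (hψ' : ∀ t ∈ Icc a b, 0 < deriv ψ t) (hα1 : 1 ≤ α)
    (hg : ContinuousOn g (Icc a b)) (hMb : ∀ τ ∈ Icc a b, |g τ| ≤ M)
    {t₁ t₂ : ℝ} (hat₂ : a ≤ t₂) (h21 : t₂ ≤ t₁) (ht₁b : t₁ ≤ b) :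
    |psiInt ψ a α g t₁ - psiInt ψ a α g t₂| ≤
      M / Real.Gamma (α + 1) * ((ψ t₁ - ψ a) ^ α - (ψ t₂ - ψ a) ^ α) := by
  have hα1' : (0:ℝ) ≤ α - 1 := by linarith
  have hαpos : (0:ℝ) < α := by linarith
  have hα0 : α ≠ 0 := ne_of_gt hαpos
  have hΓ : 0 < Real.Gamma α := Real.Gamma_pos_of_pos hαpos
  have ht₂b : t₂ ≤ b := h21.trans ht₁b
  have hat₁ : a ≤ t₁ := hat₂.trans h21
  have ht₂ab : t₂ ∈ Icc a b := ⟨hat₂, ht₂b⟩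
  have ht₁ab : t₁ ∈ Icc a b := ⟨hat₁, ht₁b⟩
  have hψ12 : ψ t₂ ≤ ψ t₁ := hψmono.monotoneOn ht₂ab ht₁ab h21
  set K₁ : ℝ → ℝ := fun τ => deriv ψ τ * (ψ t₁ - ψ τ) ^ (α - 1) with hK₁
  set K₂ : ℝ → ℝ := fun τ => deriv ψ τ * (ψ t₂ - ψ τ) ^ (α - 1) with hK₂
  have k1a2 : IntervalIntegrable K₁ volume a t₂ :=
    ker_intble (α := α) (c := t₁) hab hψdiff hα1' le_rfl hat₂ ht₂b
  have k2a2 : IntervalIntegrable K₂ volume a t₂ :=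
    ker_intble (α := α) (c := t₂) hab hψdiff hα1' le_rfl hat₂ ht₂b
  have k121 : IntervalIntegrable K₁ volume t₂ t₁ :=
    ker_intble (α := α) (c := t₁) hab hψdiff hα1' hat₂ h21 ht₁b
  have hg1 : ContinuousOn g (uIcc a t₂) := by
    rw [uIcc_of_le hat₂]; exact hg.mono (Icc_subset_Icc le_rfl ht₂b)
  have hg2 : ContinuousOn g (uIcc t₂ t₁) := by
    rw [uIcc_of_le h21]; exact hg.mono (Icc_subset_Icc hat₂ ht₁b)
  have i1 : IntervalIntegrable (fun τ => K₁ τ * g τ) volume a t₂ := k1a2.mul_continuousOn hg1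
  have i2 : IntervalIntegrable (fun τ => K₁ τ * g τ) volume t₂ t₁ := k121.mul_continuousOn hg2
  have i2' : IntervalIntegrable (fun τ => K₂ τ * g τ) volume a t₂ := k2a2.mul_continuousOn hg1
  have e1 : (∫ τ in a..t₂, K₁ τ) = ((ψ t₁ - ψ a) ^ α - (ψ t₁ - ψ t₂) ^ α) / α :=
    ker_integral hab hψmono hψdiff hα1 le_rfl hat₂ h21 ht₁b
  have e2 : (∫ τ in a..t₂, K₂ τ) = ((ψ t₂ - ψ a) ^ α - 0) / α := by
    have := ker_integral (c := t₂) hab hψmono hψdiff hα1 le_rfl hat₂ le_rfl ht₂b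
    rwa [sub_self, Real.zero_rpow hα0] at this
  have e3 : (∫ τ in t₂..t₁, K₁ τ) = ((ψ t₁ - ψ t₂) ^ α - 0) / α := by
    have := ker_integral (c := t₁) hab hψmono hψdiff hα1 hat₂ h21 le_rfl ht₁b
    rwa [sub_self, Real.zero_rpow hα0] at this
  have hKmono : ∀ τ ∈ Icc a t₂, K₂ τ ≤ K₁ τ := by
    intro τ hτ
    have hτab : τ ∈ Icc a b := ⟨hτ.1, hτ.2.trans ht₂b⟩
    have h1 : ψ τ ≤ ψ t₂ := hψmono.monotoneOn hτab ht₂ab hτ.2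
    exact mul_le_mul_of_nonneg_left
      (Real.rpow_le_rpow (sub_nonneg.mpr h1) (by linarith) hα1') (hψ' τ hτab).le
  have hK1nn : ∀ τ ∈ Icc t₂ t₁, 0 ≤ K₁ τ := by
    intro τ hτ
    have hτab : τ ∈ Icc a b := ⟨hat₂.trans hτ.1, hτ.2.trans ht₁b⟩
    have h1 : ψ τ ≤ ψ t₁ := hψmono.monotoneOn hτab ht₁ab hτ.2
    exact mul_nonneg (hψ' τ hτab).le (Real.rpow_nonneg (sub_nonneg.mpr h1) _)
  have hsi : IntervalIntegrable (fun τ => (K₁ τ - K₂ τ) * g τ) volume a t₂ := by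
    simp only [sub_mul]; exact i1.sub i2'
  have b1 : |∫ τ in a..t₂, (K₁ τ - K₂ τ) * g τ| ≤
      M * (((ψ t₁ - ψ a) ^ α - (ψ t₁ - ψ t₂) ^ α) / α - ((ψ t₂ - ψ a) ^ α - 0) / α) := by
    calc |∫ τ in a..t₂, (K₁ τ - K₂ τ) * g τ|
        ≤ ∫ τ in a..t₂, |(K₁ τ - K₂ τ) * g τ| := abs_integral_le_integral_abs hat₂
      _ ≤ ∫ τ in a..t₂, (K₁ τ - K₂ τ) * M := by
          refine integral_mono_on hat₂ hsi.abs ((k1a2.sub k2a2).mul_const M) fun τ hτ => ?_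
          have h0 : 0 ≤ K₁ τ - K₂ τ := sub_nonneg.mpr (hKmono τ hτ)
          rw [abs_mul, abs_of_nonneg h0]
          exact mul_le_mul_of_nonneg_left (hMb τ ⟨hτ.1, hτ.2.trans ht₂b⟩) h0
      _ = M * (((ψ t₁ - ψ a) ^ α - (ψ t₁ - ψ t₂) ^ α) / α - ((ψ t₂ - ψ a) ^ α - 0) / α) := by
          simp only [sub_mul]
          rw [integral_sub (k1a2.mul_const M) (k2a2.mul_const M),
            intervalIntegral.integral_mul_const, intervalIntegral.integral_mul_const, e1, e2]
          ring
  have b2 : |∫ τ in t₂..t₁, K₁ τ * g τ| ≤ M * (((ψ t₁ - ψ t₂) ^ α - 0) / α) := by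
    calc |∫ τ in t₂..t₁, K₁ τ * g τ|
        ≤ ∫ τ in t₂..t₁, |K₁ τ * g τ| := abs_integral_le_integral_abs h21
      _ ≤ ∫ τ in t₂..t₁, K₁ τ * M := by
          refine integral_mono_on h21 i2.abs (k121.mul_const M) fun τ hτ => ?_
          rw [abs_mul, abs_of_nonneg (hK1nn τ hτ)]
          exact mul_le_mul_of_nonneg_left (hMb τ ⟨hat₂.trans hτ.1, hτ.2.trans ht₁b⟩) (hK1nn τ hτ)
      _ = M * (((ψ t₁ - ψ t₂) ^ α - 0) / α) := by rw [intervalIntegral.integral_mul_const, e3]; ring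
  have hD : psiInt ψ a α g t₁ - psiInt ψ a α g t₂ = (1 / Real.Gamma α) *
      ((∫ τ in a..t₂, (K₁ τ - K₂ τ) * g τ) + ∫ τ in t₂..t₁, K₁ τ * g τ) := by
    have hsplit : (∫ τ in a..t₁, K₁ τ * g τ) =
        (∫ τ in a..t₂, K₁ τ * g τ) + ∫ τ in t₂..t₁, K₁ τ * g τ :=
      (integral_add_adjacent_intervals i1 i2).symm
    have hsub2 : (∫ τ in a..t₂, (K₁ τ - K₂ τ) * g τ) =
        (∫ τ in a..t₂, K₁ τ * g τ) - ∫ τ in a..t₂, K₂ τ * g τ := by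
      simp only [sub_mul]; exact integral_sub i1 i2'
    show (1 / Real.Gamma α) * (∫ τ in a..t₁, K₁ τ * g τ)
        - (1 / Real.Gamma α) * (∫ τ in a..t₂, K₂ τ * g τ) = _
    rw [hsplit, hsub2]; ring
  rw [hD, abs_mul, abs_of_pos (one_div_pos.mpr hΓ)]
  have hΓ1 : Real.Gamma (α + 1) = α * Real.Gamma α := Real.Gamma_add_one hα0
  calc (1 / Real.Gamma α) * |(∫ τ in a..t₂, (K₁ τ - K₂ τ) * g τ) + ∫ τ in t₂..t₁, K₁ τ * g τ|
      ≤ (1 / Real.Gamma α) * (M * (((ψ t₁ - ψ a) ^ α - (ψ t₁ - ψ t₂) ^ α) / α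
          - ((ψ t₂ - ψ a) ^ α - 0) / α) + M * (((ψ t₁ - ψ t₂) ^ α - 0) / α)) := by
        refine mul_le_mul_of_nonneg_left (le_trans (abs_add_le _ _) (add_le_add b1 b2)) ?_
        positivity
    _ = M / Real.Gamma (α + 1) * ((ψ t₁ - ψ a) ^ α - (ψ t₂ - ψ a) ^ α) := by
        rw [hΓ1]
        field_simp
        ring

/-- equicontinuity estimate for F(B_R). -/
theorem Fop_equicontinuous (a b v α K xa xa1 R M : ℝ) (ψ : ℝ → ℝ)
    (f : ℝ → ℝ → ℝ) (hab : a < b) (hv : v ∈ Ioc a b)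
    (hψmono : StrictMonoOn ψ (Icc a b)) (hψdiff : ContDiffOn ℝ 1 ψ (Icc a b))
    (hψ' : ∀ t ∈ Icc a b, 0 < deriv ψ t)
    (hα : α ∈ Set.Ioo (2 : ℝ) 3)
    (hf : ContinuousOn (fun p : ℝ × ℝ => f p.1 p.2) (Icc a b ×ˢ univ))
    (hN : 2 * K / Real.Gamma (3 + α) * (ψ v - ψ a) ^ (2 + α) - (ψ b - ψ a) ^ 2 ≠ 0)
    (hR : 0 < R)
    (hM : M = sSup ((fun p : ℝ × ℝ => |f p.1 p.2|) '' (Icc a b ×ˢ Icc (-R) R))) :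
    ∀ x : ℝ → ℝ, ContinuousOn x (Icc a b) → (∀ t ∈ Icc a b, |x t| ≤ R) →
      ∀ t₁ t₂ : ℝ, a ≤ t₂ → t₂ < t₁ → t₁ ≤ b →
        |Fop ψ a b v α K xa xa1
            (2 * K / Real.Gamma (3 + α) * (ψ v - ψ a) ^ (2 + α) - (ψ b - ψ a) ^ 2) f x t₁
          - Fop ψ a b v α K xa xa1
            (2 * K / Real.Gamma (3 + α) * (ψ v - ψ a) ^ (2 + α) - (ψ b - ψ a) ^ 2) f x t₂|
          ≤ M / Real.Gamma (α + 1) * ((ψ t₁ - ψ a) ^ α - (ψ t₂ - ψ a) ^ α)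
            + |xa1| / deriv ψ a * (ψ t₁ - ψ t₂)
            + |gammaX ψ a b v α K xa xa1
                (2 * K / Real.Gamma (3 + α) * (ψ v - ψ a) ^ (2 + α) - (ψ b - ψ a) ^ 2) f x|
              * ((ψ t₁ - ψ a) ^ 2 - (ψ t₂ - ψ a) ^ 2) := by
  intro x hx hxR t₁ t₂ hat₂ h21 ht₁b
  have hab' : a ≤ b := hab.le
  have ht₂b : t₂ ≤ b := h21.le.trans ht₁b
  have hat₁ : a ≤ t₁ := hat₂.trans h21.le
  have ht₂ab : t₂ ∈ Icc a b := ⟨hat₂, ht₂b⟩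
  have ht₁ab : t₁ ∈ Icc a b := ⟨hat₁, ht₁b⟩
  have hψ12 : ψ t₂ ≤ ψ t₁ := (hψmono ht₂ab ht₁ab h21).le
  have hψa2 : ψ a ≤ ψ t₂ := hψmono.monotoneOn ⟨le_rfl, hab'⟩ ht₂ab hat₂
  have hα1 : (1:ℝ) ≤ α := by linarith [hα.1]
  have hg : ContinuousOn (fun s => f s (x s)) (Icc a b) :=
    hf.comp (continuousOn_id.prodMk hx) fun τ hτ => ⟨hτ, mem_univ _⟩
  have hMb : ∀ τ ∈ Icc a b, |f τ (x τ)| ≤ M := by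
    have hcompact : IsCompact (Icc a b ×ˢ Icc (-R) R) := isCompact_Icc.prod isCompact_Icc
    have hcont : ContinuousOn (fun p : ℝ × ℝ => |f p.1 p.2|) (Icc a b ×ˢ Icc (-R) R) :=
      (hf.mono (prod_mono subset_rfl (subset_univ _))).abs
    have hbdd : BddAbove ((fun p : ℝ × ℝ => |f p.1 p.2|) '' (Icc a b ×ˢ Icc (-R) R)) :=
      (hcompact.image_of_continuousOn hcont).bddAbove
    intro τ hτ
    rw [hM]
    exact le_csSup hbdd ⟨(τ, x τ), ⟨hτ, mem_Icc.mpr (abs_le.mp (hxR τ hτ))⟩, rfl⟩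
  have key := psiInt_diff_bound hab hψmono hψdiff hψ' hα1 hg hMb hat₂ h21.le ht₁b
  set N := 2 * K / Real.Gamma (3 + α) * (ψ v - ψ a) ^ (2 + α) - (ψ b - ψ a) ^ 2 with hNdef
  have hdecomp : Fop ψ a b v α K xa xa1 N f x t₁ - Fop ψ a b v α K xa xa1 N f x t₂ =
      (psiInt ψ a α (fun s => f s (x s)) t₁ - psiInt ψ a α (fun s => f s (x s)) t₂)
      + xa1 / deriv ψ a * (ψ t₁ - ψ t₂)
      + gammaX ψ a b v α K xa xa1 N f x * ((ψ t₁ - ψ a) ^ 2 - (ψ t₂ - ψ a) ^ 2) := by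
    simp only [Fop]; ring
  rw [hdecomp]
  have hsqnn : 0 ≤ (ψ t₁ - ψ a) ^ 2 - (ψ t₂ - ψ a) ^ 2 :=
    sub_nonneg.mpr (pow_le_pow_left₀ (sub_nonneg.mpr hψa2) (by linarith) 2)
  refine le_trans (le_trans (abs_add_le _ _) (add_le_add_left (abs_add_le _ _) _)) ?_
  refine add_le_add (add_le_add key ?_) ?_
  · rw [abs_mul, abs_div, abs_of_pos (hψ' a ⟨le_rfl, hab'⟩),
      abs_of_nonneg (sub_nonneg.mpr hψ12)]
  · rw [abs_mul, abs_of_nonneg hsqnn]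
end
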